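/- For every state S (every string over the alphabet {o, <, >}), one has M(N(M(S))) = N(S), where M is one iteration of the combination-generating algorithm and N is negation of a state. -/

import Mathlib

/-- A cell of a state: `o` is an empty place, `l` is an element oriented left (`<`),
`r` is an element oriented right (`>`). -/
inductive Cell : Type
  | o : Cell
  | l : Cell
  | r : Cell
  deriving DecidableEq, Repr

/-- Flip the orientation of an element; empty places are fixed. -/
def Cell.flip : Cell → Cell
  | .o => .o
  | .l => .r
  | .r => .l

/-- Is the cell occupied by an element? -/
def Cell.isOcc : Cell → Bool
  | .o => false
  | _ => true

/-- The negation `N` of a state: replace `<` by `>`, `>` by `<`, keep `o`. -/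
def negState (S : List Cell) : List Cell := S.map Cell.flip

/-- The position of the nearest empty place strictly to the right of position `a`. -/
def nextO (S : List Cell) (a : ℕ) : Option ℕ :=
  ((S.drop (a + 1)).findIdx? (· == Cell.o)).map (fun off => a + 1 + off)

/-- The position of the nearest empty place strictly to the left of position `a`. -/
def prevO (S : List Cell) (a : ℕ) : Option ℕ :=
  ((S.take a).reverse.findIdx? (· == Cell.o)).map (fun off => a - 1 - off)

/-- Does every position strictly between positions `i < j` hold the cell `c`? -/
def allBetween (S : List Cell) (i j : ℕ) (c : Cell) : Bool :=
  ((S.drop (i + 1)).take (j - i - 1)).all (· == c)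

/-- Set every position `p` with `i ≤ p < j` to the cell `c`. -/
def setRange (S : List Cell) (i j : ℕ) (c : Cell) : List Cell :=
  S.mapIdx fun idx x => if i ≤ idx ∧ idx < j then c else x

/-- One iteration of the algorithm, processing the active element at position `a`
(an empty cell at `a` means the actual active element is the nearest occupied position
to the left, matching the descent of rule 5).  Rules 2, 3, 4 stop with a successful
move; rule 5 flips the active element and passes activity to the left; if there is no
occupied position to the left the iteration stops (unsuccessfully). -/
def iterAux : List Cell → ℕ → List Cell
  | S, a =>
    match S.getD a Cell.o with
    | .o => if h : a = 0 then S else iterAux S (a - 1)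
    | .r =>
      if a + 1 < S.length ∧ S.getD (a + 1) Cell.o = Cell.o then
        -- rule 2 (right)
        (S.set a Cell.o).set (a + 1) Cell.r
      else
        match nextO S a with
        | some q =>
          if allBetween S a q Cell.r then
            -- rule 4
            (S.set a Cell.o).set q Cell.r
          else
            -- rule 5
            if h : a = 0 then S.set a Cell.l else iterAux (S.set a Cell.l) (a - 1)
        | none =>
            if h : a = 0 then S.set a Cell.l else iterAux (S.set a Cell.l) (a - 1)
    | .l =>
      if 0 < a ∧ S.getD (a - 1) Cell.o = Cell.o then
        -- rule 2 (left)
        (S.set a Cell.o).set (a - 1) Cell.l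
      else
        match prevO S a with
        | some p =>
          if allBetween S p a Cell.l then
            -- rule 3
            ((setRange S (p + 1) a Cell.r).set a Cell.o).set p Cell.l
          else
            -- rule 5
            if h : a = 0 then S.set a Cell.r else iterAux (S.set a Cell.r) (a - 1)
        | none =>
            if h : a = 0 then S.set a Cell.r else iterAux (S.set a Cell.r) (a - 1)
  termination_by S a => a
  decreasing_by all_goals omega

/-- One iteration `M` of the algorithm: the active element is initially the rightmost
occupied position. -/
def Mstep (S : List Cell) : List Cell :=
  iterAux S (S.length - 1)


section Found

@[simp] lemma Cell.flip_flip (c : Cell) : c.flip.flip = c := by cases c <;> rfl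
@[simp] lemma Cell.flip_eq_o_iff (c : Cell) : c.flip = .o ↔ c = .o := by cases c <;> simp [Cell.flip]
lemma Cell.flip_eq_r_iff (c : Cell) : c.flip = .r ↔ c = .l := by cases c <;> simp [Cell.flip]
lemma Cell.flip_eq_l_iff (c : Cell) : c.flip = .l ↔ c = .r := by cases c <;> simp [Cell.flip]

/-- getD-based cell access. -/
def gg (S : List Cell) (i : ℕ) : Cell := S.getD i Cell.o

lemma gg_of_ge {S : List Cell} {i : ℕ} (h : S.length ≤ i) : gg S i = .o :=
  List.getD_eq_default _ _ h

lemma gg_eq_getElem {S : List Cell} {i : ℕ} (h : i < S.length) : gg S i = S[i] :=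
  List.getD_eq_getElem _ _ h

lemma lt_length_of_gg {S : List Cell} {i : ℕ} (h : gg S i ≠ .o) : i < S.length := by
  by_contra hc
  exact h (gg_of_ge (by omega))

lemma ext_gg {S T : List Cell} (hl : S.length = T.length) (h : ∀ i, gg S i = gg T i) : S = T := by
  apply List.ext_getElem?
  intro n
  by_cases hn : n < S.length
  · rw [List.getElem?_eq_getElem hn, List.getElem?_eq_getElem (by omega)]
    rw [← gg_eq_getElem hn, ← gg_eq_getElem (show n < T.length by omega)]
    rw [h n]
  · rw [List.getElem?_eq_none (by omega), List.getElem?_eq_none (by omega)]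

@[simp] lemma length_negState (S : List Cell) : (negState S).length = S.length := by
  simp [negState]

lemma gg_negState (S : List Cell) (i : ℕ) : gg (negState S) i = (gg S i).flip := by
  by_cases h : i < S.length
  · rw [gg_eq_getElem (by simp [h]), gg_eq_getElem h]
    simp [negState]
  · rw [gg_of_ge (by simp; omega), gg_of_ge (by omega)]
    rfl

lemma negState_negState (S : List Cell) : negState (negState S) = S := by
  apply ext_gg (by simp)
  intro i
  simp [gg_negState]

lemma gg_set (S : List Cell) (j : ℕ) (c : Cell) (i : ℕ) :
    gg (S.set j c) i = if j = i ∧ j < S.length then c else gg S i := by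
  by_cases h : i < S.length
  · rw [gg_eq_getElem (by simp [h])]
    rw [List.getElem_set]
    split_ifs with h1 h2 h3
    · rfl
    · omega
    · omega
    · exact (gg_eq_getElem h).symm
  · rw [gg_of_ge (by simp; omega), if_neg (by omega)]
    rw [gg_of_ge (by omega)]

@[simp] lemma length_setRange (S : List Cell) (i j : ℕ) (c : Cell) :
    (setRange S i j c).length = S.length := by simp [setRange]

lemma gg_setRange (S : List Cell) (a b : ℕ) (c : Cell) (i : ℕ) :
    gg (setRange S a b c) i = if a ≤ i ∧ i < b ∧ i < S.length then c else gg S i := by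
  by_cases h : i < S.length
  · rw [gg_eq_getElem (by simp [h])]
    unfold setRange
    rw [List.getElem_mapIdx]
    split_ifs <;> first | rfl | (exact (gg_eq_getElem h).symm) | omega
  · rw [gg_of_ge (by simp only [length_setRange]; omega), if_neg (by omega), gg_of_ge (by omega)]

/-- The state with all positions strictly above `p` flipped. -/
def flipAbove (S : List Cell) (p : ℕ) : List Cell :=
  S.mapIdx fun i x => if i ≤ p then x else x.flip

@[simp] lemma length_flipAbove (S : List Cell) (p : ℕ) :
    (flipAbove S p).length = S.length := by simp [flipAbove]

lemma gg_flipAbove (S : List Cell) (p i : ℕ) :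
    gg (flipAbove S p) i = if i ≤ p then gg S i else (gg S i).flip := by
  by_cases h : i < S.length
  · rw [gg_eq_getElem (by simp [h])]
    unfold flipAbove
    rw [List.getElem_mapIdx]
    split_ifs <;> rw [gg_eq_getElem h]
  · rw [gg_of_ge (by simp; omega), gg_of_ge (by omega)]
    split_ifs <;> rfl

lemma flipAbove_of_ge {S : List Cell} {p : ℕ} (h : S.length ≤ p + 1) : flipAbove S p = S := by
  apply ext_gg (by simp)
  intro i
  rw [gg_flipAbove]
  split_ifs with h1
  · rfl
  · rw [gg_of_ge (by omega)]; rfl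

lemma flipAbove_pred_o {S : List Cell} {p : ℕ} (h : gg S p = .o) :
    flipAbove S p = flipAbove S (p - 1) := by
  apply ext_gg (by simp)
  intro i
  rw [gg_flipAbove, gg_flipAbove]
  split_ifs with h1 h2 h3
  · rfl
  · rw [show i = p by omega, h]; rfl
  · omega
  · rfl

lemma flipAbove_set_flip {S : List Cell} {p : ℕ} (hp : p ≠ 0) (h : p < S.length) :
    (flipAbove S p).set p (gg S p).flip = flipAbove S (p - 1) := by
  apply ext_gg (by simp)
  intro i
  rw [gg_set, gg_flipAbove, gg_flipAbove, length_flipAbove]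
  by_cases hip : i = p
  · subst hip
    rw [if_pos ⟨rfl, h⟩, if_neg (by omega)]
  · rw [if_neg (by tauto)]
    split_ifs <;> first | rfl | omega

lemma flipAbove_zero_set_flip {S : List Cell} (h : 0 < S.length) :
    (flipAbove S 0).set 0 (gg S 0).flip = negState S := by
  apply ext_gg (by simp)
  intro i
  rw [gg_set, gg_flipAbove, gg_negState, length_flipAbove]
  by_cases hip : i = 0
  · subst hip
    rw [if_pos ⟨rfl, h⟩]
  · rw [if_neg (by tauto), if_neg (by omega)]

lemma flipAbove_zero_o {S : List Cell} (h : gg S 0 = .o) :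
    flipAbove S 0 = negState S := by
  apply ext_gg (by simp)
  intro i
  rw [gg_flipAbove, gg_negState]
  split_ifs with h1
  · rw [show i = 0 by omega, h]; rfl
  · rfl

/-! ### Specifications of nextO, prevO, allBetween -/

lemma nextO_some_iff {S : List Cell} {a q : ℕ} :
    nextO S a = some q ↔
      a < q ∧ q < S.length ∧ gg S q = .o ∧ ∀ k, a < k → k < q → gg S k ≠ .o := by
  unfold nextO
  rw [Option.map_eq_some_iff]
  constructor
  · rintro ⟨off, hf, rfl⟩
    rw [List.findIdx?_eq_some_iff_getElem] at hf
    obtain ⟨h, hp, hj⟩ := hf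
    rw [List.length_drop] at h
    have hq : a + 1 + off < S.length := by omega
    refine ⟨by omega, hq, ?_, ?_⟩
    · have := hp
      rw [List.getElem_drop] at this
      rw [gg_eq_getElem hq]
      simpa using this
    · intro k h1 h2
      have hk : k < S.length := by omega
      have := hj (k - a - 1) (by omega)
      rw [List.getElem_drop, ← gg_eq_getElem (show a + 1 + (k - a - 1) < S.length by omega)] at this
      rw [gg_eq_getElem hk, ← gg_eq_getElem hk]
      have he : a + 1 + (k - a - 1) = k := by omega
      rw [he] at this
      simpa using this
  · rintro ⟨h1, h2, h3, h4⟩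
    refine ⟨q - a - 1, ?_, by omega⟩
    rw [List.findIdx?_eq_some_iff_getElem]
    refine ⟨by rw [List.length_drop]; omega, ?_, ?_⟩
    · rw [List.getElem_drop, ← gg_eq_getElem (show a + 1 + (q - a - 1) < S.length by omega)]
      rw [show a + 1 + (q - a - 1) = q by omega, h3]
      rfl
    · intro j hj
      rw [List.getElem_drop, ← gg_eq_getElem (show a + 1 + j < S.length by omega)]
      have := h4 (a + 1 + j) (by omega) (by omega)
      simpa using this

lemma nextO_none_iff {S : List Cell} {a : ℕ} :
    nextO S a = none ↔ ∀ k, a < k → k < S.length → gg S k ≠ .o := by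
  unfold nextO
  rw [Option.map_eq_none_iff, List.findIdx?_eq_none_iff]
  constructor
  · intro h k h1 h2
    have hmem : S[k]'(by omega) ∈ S.drop (a + 1) := by
      rw [List.mem_iff_getElem]
      refine ⟨k - a - 1, by rw [List.length_drop]; omega, ?_⟩
      rw [List.getElem_drop, ← gg_eq_getElem (show a + 1 + (k - a - 1) < S.length by omega),
        show a + 1 + (k - a - 1) = k by omega, gg_eq_getElem h2]
    have := h _ hmem
    rw [gg_eq_getElem h2]
    simpa using this
  · intro h x hx
    rw [List.mem_iff_getElem] at hx
    obtain ⟨m, hm, rfl⟩ := hx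
    rw [List.length_drop] at hm
    rw [List.getElem_drop, ← gg_eq_getElem (show a + 1 + m < S.length by omega)]
    have := h (a + 1 + m) (by omega) (by omega)
    simpa using this

lemma prevO_some_iff {S : List Cell} {a q : ℕ} (ha : a ≤ S.length) :
    prevO S a = some q ↔
      q < a ∧ gg S q = .o ∧ ∀ k, q < k → k < a → gg S k ≠ .o := by
  have hlt : (S.take a).length = a := by rw [List.length_take]; omega
  have hlr : (S.take a).reverse.length = a := by rw [List.length_reverse]; omega
  unfold prevO
  rw [Option.map_eq_some_iff]
  constructor
  · rintro ⟨off, hf, rfl⟩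
    rw [List.findIdx?_eq_some_iff_getElem] at hf
    obtain ⟨h, hp, hj⟩ := hf
    rw [hlr] at h
    have key : ∀ m (hm : m < a), (S.take a).reverse[m]'(by omega) = S[a - 1 - m]'(by omega) := by
      intro m hm
      rw [List.getElem_reverse, List.getElem_take]
      congr 1
      omega
    refine ⟨by omega, ?_, ?_⟩
    · rw [key off h, ← gg_eq_getElem (show a - 1 - off < S.length by omega)] at hp
      simpa using hp
    · intro k h1 h2
      have := hj (a - 1 - k) (by omega)
      rw [key (a - 1 - k) (by omega),
        ← gg_eq_getElem (show a - 1 - (a - 1 - k) < S.length by omega),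
        show a - 1 - (a - 1 - k) = k by omega] at this
      rw [gg_eq_getElem (show k < S.length by omega), ← gg_eq_getElem (show k < S.length by omega)]
      simpa using this
  · rintro ⟨h1, h2, h3⟩
    refine ⟨a - 1 - q, ?_, by omega⟩
    rw [List.findIdx?_eq_some_iff_getElem]
    have key : ∀ m (hm : m < a), (S.take a).reverse[m]'(by omega) = S[a - 1 - m]'(by omega) := by
      intro m hm
      rw [List.getElem_reverse, List.getElem_take]
      congr 1
      omega
    refine ⟨by omega, ?_, ?_⟩
    · rw [key (a - 1 - q) (by omega),
        ← gg_eq_getElem (show a - 1 - (a - 1 - q) < S.length by omega),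
        show a - 1 - (a - 1 - q) = q by omega, h2]
      rfl
    · intro j hj
      rw [key j (by omega), ← gg_eq_getElem (show a - 1 - j < S.length by omega)]
      have := h3 (a - 1 - j) (by omega) (by omega)
      simpa using this

lemma prevO_none_iff {S : List Cell} {a : ℕ} (ha : a ≤ S.length) :
    prevO S a = none ↔ ∀ k, k < a → gg S k ≠ .o := by
  have hlt : (S.take a).length = a := by rw [List.length_take]; omega
  unfold prevO
  rw [Option.map_eq_none_iff, List.findIdx?_eq_none_iff]
  constructor
  · intro h k hk
    have hmem : S[k]'(by omega) ∈ (S.take a).reverse := by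
      rw [List.mem_reverse, List.mem_iff_getElem]
      exact ⟨k, by omega, by rw [List.getElem_take]⟩
    have := h _ hmem
    rw [gg_eq_getElem (show k < S.length by omega)]
    simpa using this
  · intro h x hx
    rw [List.mem_reverse, List.mem_iff_getElem] at hx
    obtain ⟨m, hm, rfl⟩ := hx
    rw [hlt] at hm
    rw [List.getElem_take, ← gg_eq_getElem (show m < S.length by omega)]
    have := h m hm
    simpa using this

lemma prevO_exists {S : List Cell} {a w : ℕ} (ha : a ≤ S.length) (hw : w < a)
    (ho : gg S w = .o) :
    ∃ z, prevO S a = some z ∧ w ≤ z ∧ z < a ∧ gg S z = .o ∧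
      ∀ k, z < k → k < a → gg S k ≠ .o := by
  cases h : prevO S a with
  | none => exact absurd ho ((prevO_none_iff ha).1 h w hw)
  | some z =>
    obtain ⟨h1, h2, h3⟩ := (prevO_some_iff ha).1 h
    refine ⟨z, rfl, ?_, h1, h2, h3⟩
    by_contra hc
    exact h3 w (by omega) hw ho

lemma allBetween_iff {S : List Cell} {i j : ℕ} {c : Cell} :
    allBetween S i j c = true ↔ ∀ k, i < k → k < j → k < S.length → gg S k = c := by
  unfold allBetween
  rw [List.all_eq_true]
  constructor
  · intro h k h1 h2 h3
    have hm : k - i - 1 < ((S.drop (i + 1)).take (j - i - 1)).length := by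
      rw [List.length_take, List.length_drop]
      omega
    have := h _ (List.getElem_mem hm)
    rw [List.getElem_take, List.getElem_drop,
      ← gg_eq_getElem (show i + 1 + (k - i - 1) < S.length by omega),
      show i + 1 + (k - i - 1) = k by omega] at this
    simpa using this
  · intro h x hx
    rw [List.mem_iff_getElem] at hx
    obtain ⟨m, hm, rfl⟩ := hx
    rw [List.length_take, List.length_drop] at hm
    rw [List.getElem_take, List.getElem_drop,
      ← gg_eq_getElem (show i + 1 + m < S.length by omega)]
    have := h (i + 1 + m) (by omega) (by omega) (by omega)
    simpa using this

lemma allBetween_false {S : List Cell} {i j : ℕ} {c : Cell} {k : ℕ}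
    (h1 : i < k) (h2 : k < j) (h3 : k < S.length) (h4 : gg S k ≠ c) :
    allBetween S i j c = false := by
  rw [← Bool.not_eq_true, allBetween_iff]
  push_neg
  exact ⟨k, h1, h2, h3, h4⟩

end Found

section Step

lemma nextO_flipAbove (V : List Cell) (p : ℕ) :
    nextO (flipAbove V p) p = nextO V p := by
  cases h : nextO V p with
  | some q =>
    obtain ⟨h1, h2, h3, h4⟩ := nextO_some_iff.1 h
    rw [nextO_some_iff]
    refine ⟨h1, by simpa using h2, ?_, ?_⟩
    · rw [gg_flipAbove, if_neg (by omega), h3]; rfl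
    · intro k hk1 hk2
      rw [gg_flipAbove, if_neg (by omega)]
      simpa using h4 k hk1 hk2
  | none =>
    rw [nextO_none_iff] at h ⊢
    intro k h1 h2
    rw [gg_flipAbove, if_neg (by omega)]
    simp only [length_flipAbove] at h2
    simpa using h k h1 h2

lemma prevO_flipAbove (V : List Cell) (p : ℕ) (hp : p ≤ V.length) :
    prevO (flipAbove V p) p = prevO V p := by
  cases h : prevO V p with
  | some q =>
    obtain ⟨h1, h2, h3⟩ := (prevO_some_iff hp).1 h
    rw [prevO_some_iff (by simpa using hp)]
    refine ⟨h1, ?_, ?_⟩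
    · rw [gg_flipAbove, if_pos (by omega), h2]
    · intro k hk1 hk2
      rw [gg_flipAbove, if_pos (by omega)]
      exact h3 k hk1 hk2
  | none =>
    rw [prevO_none_iff hp] at h
    rw [prevO_none_iff (by simpa using hp)]
    intro k hk
    rw [gg_flipAbove, if_pos (by omega)]
    exact h k hk

lemma gg_flipAbove_self (V : List Cell) (p : ℕ) :
    (flipAbove V p).getD p Cell.o = gg V p := by
  have := gg_flipAbove V p p
  rw [if_pos le_rfl] at this
  exact this

lemma iterF_o {V : List Cell} {p : ℕ} (h : gg V p = .o) :
    iterAux (flipAbove V p) p =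
      if p = 0 then negState V else iterAux (flipAbove V (p - 1)) (p - 1) := by
  have hW : (flipAbove V p).getD p Cell.o = Cell.o := by rw [gg_flipAbove_self, h]
  rw [iterAux, hW]
  show (if _ : p = 0 then flipAbove V p else iterAux (flipAbove V p) (p - 1)) = _
  by_cases h0 : p = 0
  · rw [dif_pos h0, if_pos h0, h0]
    exact flipAbove_zero_o (h0 ▸ h)
  · rw [dif_neg h0, if_neg h0, flipAbove_pred_o h]

lemma iterF_r2 {V : List Cell} {p : ℕ} (h : gg V p = .r) (h1 : p + 1 < V.length)
    (h2 : gg V (p + 1) = .o) :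
    iterAux (flipAbove V p) p = ((flipAbove V p).set p .o).set (p + 1) .r := by
  have hW : (flipAbove V p).getD p Cell.o = Cell.r := by rw [gg_flipAbove_self, h]
  rw [iterAux, hW]
  show (if _ ∧ _ then _ else _) = _
  rw [if_pos ⟨by simpa using h1, by
    show gg (flipAbove V p) (p + 1) = Cell.o
    rw [gg_flipAbove, if_neg (by omega), h2]; rfl⟩]

lemma iterF_r4 {V : List Cell} {p q : ℕ} (h : gg V p = .r)
    (h2 : ¬(p + 1 < V.length ∧ gg V (p + 1) = .o))
    (hq : nextO V p = some q) (hb : ∀ k, p < k → k < q → gg V k = .l) :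
    iterAux (flipAbove V p) p = ((flipAbove V p).set p .o).set q .r := by
  have hW : (flipAbove V p).getD p Cell.o = Cell.r := by rw [gg_flipAbove_self, h]
  rw [iterAux, hW]
  show (if _ ∧ _ then _ else _) = _
  rw [if_neg (by
    rintro ⟨c1, c2⟩
    refine h2 ⟨by simpa using c1, ?_⟩
    have : gg (flipAbove V p) (p + 1) = Cell.o := c2
    rw [gg_flipAbove, if_neg (by omega)] at this
    simpa using this)]
  rw [nextO_flipAbove, hq]
  show (if _ then _ else _) = _
  rw [if_pos (allBetween_iff.2 (by
    intro k hk1 hk2 _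
    rw [gg_flipAbove, if_neg (by omega), hb k hk1 hk2]; rfl))]

lemma iterF_r5 {V : List Cell} {p : ℕ} (h : gg V p = .r)
    (h2 : ¬(p + 1 < V.length ∧ gg V (p + 1) = .o))
    (hnb : ∀ q, nextO V p = some q → ∃ k, p < k ∧ k < q ∧ gg V k ≠ .l) :
    iterAux (flipAbove V p) p =
      if p = 0 then negState V else iterAux (flipAbove V (p - 1)) (p - 1) := by
  have hW : (flipAbove V p).getD p Cell.o = Cell.r := by rw [gg_flipAbove_self, h]
  have hlen : p < V.length := lt_length_of_gg (by rw [h]; simp)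
  have tail : (if _ : p = 0 then (flipAbove V p).set p Cell.l
      else iterAux ((flipAbove V p).set p Cell.l) (p - 1)) =
      if p = 0 then negState V else iterAux (flipAbove V (p - 1)) (p - 1) := by
    have hset : (flipAbove V p).set p Cell.l = (flipAbove V p).set p (gg V p).flip := by
      rw [h]; rfl
    rw [hset]
    split_ifs with h0
    · subst h0; exact flipAbove_zero_set_flip (by omega)
    · rw [flipAbove_set_flip h0 hlen]
  rw [iterAux, hW]
  show (if _ ∧ _ then _ else _) = _
  rw [if_neg (by
    rintro ⟨c1, c2⟩
    refine h2 ⟨by simpa using c1, ?_⟩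
    have : gg (flipAbove V p) (p + 1) = Cell.o := c2
    rw [gg_flipAbove, if_neg (by omega)] at this
    simpa using this)]
  rw [nextO_flipAbove]
  cases hq : nextO V p with
  | none => exact tail
  | some q =>
    obtain ⟨k, hk1, hk2, hk3⟩ := hnb q hq
    obtain ⟨hq1, hq2, hq3, hq4⟩ := nextO_some_iff.1 hq
    show (if _ then _ else _) = _
    rw [if_neg (by
      rw [allBetween_false (S := flipAbove V p) hk1 hk2 (by simpa using by omega : k < (flipAbove V p).length) (by
        rw [gg_flipAbove, if_neg (by omega)]
        rw [Ne, Cell.flip_eq_r_iff]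
        exact hk3)]
      simp)]
    exact tail

lemma iterF_l2 {V : List Cell} {p : ℕ} (h : gg V p = .l) (h1 : 0 < p)
    (h2 : gg V (p - 1) = .o) :
    iterAux (flipAbove V p) p = ((flipAbove V p).set p .o).set (p - 1) .l := by
  have hW : (flipAbove V p).getD p Cell.o = Cell.l := by rw [gg_flipAbove_self, h]
  rw [iterAux, hW]
  show (if _ ∧ _ then _ else _) = _
  rw [if_pos ⟨h1, by
    show gg (flipAbove V p) (p - 1) = Cell.o
    rw [gg_flipAbove, if_pos (by omega), h2]⟩]

lemma iterF_l3 {V : List Cell} {p q : ℕ} (h : gg V p = .l)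
    (h2 : ¬(0 < p ∧ gg V (p - 1) = .o))
    (hq : prevO V p = some q) (hb : ∀ k, q < k → k < p → gg V k = .l) :
    iterAux (flipAbove V p) p =
      ((setRange (flipAbove V p) (q + 1) p .r).set p .o).set q .l := by
  have hW : (flipAbove V p).getD p Cell.o = Cell.l := by rw [gg_flipAbove_self, h]
  have hlen : p < V.length := lt_length_of_gg (by rw [h]; simp)
  rw [iterAux, hW]
  show (if _ ∧ _ then _ else _) = _
  rw [if_neg (by
    rintro ⟨c1, c2⟩
    refine h2 ⟨c1, ?_⟩
    have : gg (flipAbove V p) (p - 1) = Cell.o := c2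
    rw [gg_flipAbove, if_pos (by omega)] at this
    exact this)]
  rw [prevO_flipAbove _ _ (by omega), hq]
  show (if _ then _ else _) = _
  rw [if_pos (allBetween_iff.2 (by
    intro k hk1 hk2 _
    rw [gg_flipAbove, if_pos (by omega)]
    exact hb k hk1 hk2))]

lemma iterF_l5 {V : List Cell} {p : ℕ} (h : gg V p = .l)
    (h2 : ¬(0 < p ∧ gg V (p - 1) = .o))
    (hnb : ∀ q, prevO V p = some q → ∃ k, q < k ∧ k < p ∧ gg V k ≠ .l) :
    iterAux (flipAbove V p) p =
      if p = 0 then negState V else iterAux (flipAbove V (p - 1)) (p - 1) := by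
  have hW : (flipAbove V p).getD p Cell.o = Cell.l := by rw [gg_flipAbove_self, h]
  have hlen : p < V.length := lt_length_of_gg (by rw [h]; simp)
  have tail : (if _ : p = 0 then (flipAbove V p).set p Cell.r
      else iterAux ((flipAbove V p).set p Cell.r) (p - 1)) =
      if p = 0 then negState V else iterAux (flipAbove V (p - 1)) (p - 1) := by
    have hset : (flipAbove V p).set p Cell.r = (flipAbove V p).set p (gg V p).flip := by
      rw [h]; rfl
    rw [hset]
    split_ifs with h0
    · subst h0; exact flipAbove_zero_set_flip (by omega)
    · rw [flipAbove_set_flip h0 hlen]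
  rw [iterAux, hW]
  show (if _ ∧ _ then _ else _) = _
  rw [if_neg (by
    rintro ⟨c1, c2⟩
    refine h2 ⟨c1, ?_⟩
    have : gg (flipAbove V p) (p - 1) = Cell.o := c2
    rw [gg_flipAbove, if_pos (by omega)] at this
    exact this)]
  rw [prevO_flipAbove _ _ (by omega)]
  cases hq : prevO V p with
  | none => exact tail
  | some q =>
    obtain ⟨k, hk1, hk2, hk3⟩ := hnb q hq
    show (if _ then _ else _) = _
    rw [if_neg (by
      rw [allBetween_false (S := flipAbove V p) hk1 hk2 (by simpa using by omega : k < (flipAbove V p).length) (by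
        rw [gg_flipAbove, if_pos (by omega)]
        exact hk3)]
      simp)]
    exact tail

/-- No rule (2,3,4) fires at position `j` of the state `flipAbove X j`
(conditions expressed on `X` itself). -/
def NoFire (X : List Cell) (j : ℕ) : Prop :=
  match gg X j with
  | Cell.o => True
  | Cell.r => ¬(j + 1 < X.length ∧ gg X (j + 1) = Cell.o) ∧
      ∀ q, nextO X j = some q → ∃ k, j < k ∧ k < q ∧ gg X k ≠ Cell.l
  | Cell.l => ¬(0 < j ∧ gg X (j - 1) = Cell.o) ∧
      ∀ q, prevO X j = some q → ∃ k, q < k ∧ k < j ∧ gg X k ≠ Cell.l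

lemma noFire_o {X : List Cell} {j : ℕ} (h : gg X j = .o) : NoFire X j := by
  unfold NoFire; rw [h]; trivial

lemma noFire_r_iff {X : List Cell} {j : ℕ} (h : gg X j = .r) :
    NoFire X j ↔ (¬(j + 1 < X.length ∧ gg X (j + 1) = Cell.o) ∧
      ∀ q, nextO X j = some q → ∃ k, j < k ∧ k < q ∧ gg X k ≠ Cell.l) := by
  unfold NoFire; rw [h]

lemma noFire_l_iff {X : List Cell} {j : ℕ} (h : gg X j = .l) :
    NoFire X j ↔ (¬(0 < j ∧ gg X (j - 1) = Cell.o) ∧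
      ∀ q, prevO X j = some q → ∃ k, q < k ∧ k < j ∧ gg X k ≠ Cell.l) := by
  unfold NoFire; rw [h]

lemma step_noFire {X : List Cell} {j : ℕ} (hj : NoFire X j) (h0 : j ≠ 0) :
    iterAux (flipAbove X j) j = iterAux (flipAbove X (j - 1)) (j - 1) := by
  cases hc : gg X j with
  | o => rw [iterF_o hc, if_neg h0]
  | r =>
    obtain ⟨h2, hnb⟩ := (noFire_r_iff hc).1 hj
    rw [iterF_r5 hc h2 hnb, if_neg h0]
  | l =>
    obtain ⟨h2, hnb⟩ := (noFire_l_iff hc).1 hj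
    rw [iterF_l5 hc h2 hnb, if_neg h0]

lemma desc {X : List Cell} (t p : ℕ) (hpt : p ≤ t)
    (hnf : ∀ j, p < j → NoFire X j) :
    iterAux (flipAbove X t) t = iterAux (flipAbove X p) p := by
  induction t with
  | zero => rw [show p = 0 by omega]
  | succ n ih =>
    rcases Nat.eq_or_lt_of_le hpt with he | hl
    · rw [he]
    · have hs := step_noFire (hnf (n + 1) (by omega)) (by omega)
      rw [Nat.add_sub_cancel] at hs
      rw [hs]
      exact ih (by omega)

end Step

section Transfer

lemma noFire_r_transfer {X Y : List Cell} {j : ℕ} (hlen : Y.length = X.length)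
    (hag : ∀ k, j ≤ k → gg Y k = gg X k) (hr : gg X j = .r) (h : NoFire X j) :
    NoFire Y j := by
  have hYr : gg Y j = .r := by rw [hag j le_rfl, hr]
  obtain ⟨h2, hnb⟩ := (noFire_r_iff hr).1 h
  rw [noFire_r_iff hYr]
  constructor
  · rintro ⟨c1, c2⟩
    exact h2 ⟨by omega, by rw [← hag (j + 1) (by omega)]; exact c2⟩
  · intro q hq
    have hqX : nextO X j = some q := by
      rw [nextO_some_iff] at hq ⊢
      obtain ⟨a1, a2, a3, a4⟩ := hq
      exact ⟨a1, by omega, by rw [← hag q (by omega)]; exact a3,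
        fun k hk1 hk2 => by rw [← hag k (by omega)]; exact a4 k hk1 hk2⟩
    obtain ⟨k, hk1, hk2, hk3⟩ := hnb q hqX
    exact ⟨k, hk1, hk2, by rw [hag k (by omega)]; exact hk3⟩

lemma transfer_r2 {V Y : List Cell} {a : ℕ} (hlen : Y.length = V.length)
    (ho : gg V (a + 1) = .o)
    (hY : ∀ k, a + 1 < k → gg Y k = gg V k)
    (hYa1 : gg Y (a + 1) = .l) (hYa : gg Y a = .o)
    (hnf : ∀ j, a < j → NoFire V j) :
    ∀ j, a + 1 < j → NoFire Y j := by
  intro j hj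
  cases hc : gg Y j with
  | o => exact noFire_o hc
  | r =>
    exact noFire_r_transfer hlen (fun k hk => hY k (by omega))
      (by rw [← hY j hj]; exact hc) (hnf j (by omega))
  | l =>
    have hVj : gg V j = .l := by rw [← hY j hj]; exact hc
    have hjlen : j < V.length := lt_length_of_gg (by rw [hVj]; simp)
    obtain ⟨h2, hnb⟩ := (noFire_l_iff hVj).1 (hnf j (by omega))
    have hj3 : a + 3 ≤ j := by
      by_contra hc2
      exact h2 ⟨by omega, by rw [show j - 1 = a + 1 by omega]; exact ho⟩
    rw [noFire_l_iff hc]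
    constructor
    · rintro ⟨c1, c2⟩
      exact h2 ⟨by omega, by rw [← hY (j - 1) (by omega)]; exact c2⟩
    · intro z hz
      obtain ⟨z', hz', hz'w, hz'a, hz'o, hz'n⟩ :=
        prevO_exists (show j ≤ V.length by omega) (show a + 1 < j by omega) ho
      obtain ⟨k, hk1, hk2, hk3⟩ := hnb z' hz'
      by_cases hcase : a + 2 ≤ z'
      · have hzY : prevO Y j = some z' := by
          rw [prevO_some_iff (by omega : j ≤ Y.length)]
          exact ⟨hz'a, by rw [hY z' (by omega)]; exact hz'o,
            fun m hm1 hm2 => by rw [hY m (by omega)]; exact hz'n m hm1 hm2⟩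
        rw [hz] at hzY
        have hze : z = z' := Option.some.inj hzY
        exact ⟨k, by omega, hk2, by rw [hY k (by omega)]; exact hk3⟩
      · have hz'e : z' = a + 1 := by omega
        have hzY : prevO Y j = some a := by
          rw [prevO_some_iff (by omega : j ≤ Y.length)]
          refine ⟨by omega, hYa, ?_⟩
          intro m hm1 hm2
          by_cases hm : m = a + 1
          · rw [hm, hYa1]; simp
          · rw [hY m (by omega)]
            exact hz'n m (by omega) hm2
        rw [hz] at hzY
        have hze : z = a := Option.some.inj hzY
        exact ⟨k, by omega, hk2, by rw [hY k (by omega)]; exact hk3⟩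

lemma transfer_l2 {V Y : List Cell} {a : ℕ} (hlen : Y.length = V.length)
    (ha : 0 < a) (hVl : gg V a = .l) (ho : gg V (a - 1) = .o)
    (hY : ∀ k, a < k → gg Y k = gg V k) (hYa : gg Y a = .o)
    (hnf : ∀ j, a < j → NoFire V j) :
    ∀ j, a < j → NoFire Y j := by
  intro j hj
  cases hc : gg Y j with
  | o => exact noFire_o hc
  | r =>
    exact noFire_r_transfer hlen (fun k hk => hY k (by omega))
      (by rw [← hY j hj]; exact hc) (hnf j hj)
  | l =>
    have hVj : gg V j = .l := by rw [← hY j hj]; exact hc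
    have hjlen : j < V.length := lt_length_of_gg (by rw [hVj]; simp)
    obtain ⟨h2, hnb⟩ := (noFire_l_iff hVj).1 (hnf j hj)
    have hj2 : a + 2 ≤ j := by
      by_contra hc2
      have hje : j = a + 1 := by omega
      subst hje
      have hp : prevO V (a + 1) = some (a - 1) := by
        rw [prevO_some_iff (by omega : a + 1 ≤ V.length)]
        refine ⟨by omega, ho, ?_⟩
        intro m hm1 hm2
        rw [show m = a by omega, hVl]; simp
      obtain ⟨k, hk1, hk2, hk3⟩ := hnb (a - 1) hp
      exact hk3 (by rw [show k = a by omega]; exact hVl)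
    rw [noFire_l_iff hc]
    constructor
    · rintro ⟨c1, c2⟩
      exact h2 ⟨by omega, by rw [← hY (j - 1) (by omega)]; exact c2⟩
    · intro z hz
      obtain ⟨z', hz', hz'w, hz'a, hz'o, hz'n⟩ :=
        prevO_exists (show j ≤ V.length by omega) (show a - 1 < j by omega) ho
      obtain ⟨k, hk1, hk2, hk3⟩ := hnb z' hz'
      have hz'ne : z' ≠ a := by
        intro he
        rw [he, hVl] at hz'o
        exact absurd hz'o (by simp)
      by_cases hcase : a + 1 ≤ z'
      · have hzY : prevO Y j = some z' := by
          rw [prevO_some_iff (by omega : j ≤ Y.length)]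
          exact ⟨hz'a, by rw [hY z' (by omega)]; exact hz'o,
            fun m hm1 hm2 => by rw [hY m (by omega)]; exact hz'n m hm1 hm2⟩
        rw [hz] at hzY
        have hze : z = z' := Option.some.inj hzY
        exact ⟨k, by omega, hk2, by rw [hY k (by omega)]; exact hk3⟩
      · have hz'e : z' = a - 1 := by omega
        have hzY : prevO Y j = some a := by
          rw [prevO_some_iff (by omega : j ≤ Y.length)]
          refine ⟨by omega, hYa, ?_⟩
          intro m hm1 hm2
          rw [hY m (by omega)]
          exact hz'n m (by omega) hm2
        rw [hz] at hzY
        have hze : z = a := Option.some.inj hzY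
        have hkne : k ≠ a := fun he => hk3 (by rw [he]; exact hVl)
        exact ⟨k, by omega, hk2, by rw [hY k (by omega)]; exact hk3⟩

lemma transfer_r4 {V Y : List Cell} {a q : ℕ} (hlen : Y.length = V.length)
    (haq : a + 2 ≤ q) (hVo : gg V q = .o)
    (hY : ∀ k, q < k → gg Y k = gg V k) (hYq : gg Y q = .l)
    (hYbet : ∀ k, a < k → k < q → gg Y k = .l) (hYa : gg Y a = .o)
    (hnf : ∀ j, a < j → NoFire V j) :
    ∀ j, q < j → NoFire Y j := by
  intro j hj
  cases hc : gg Y j with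
  | o => exact noFire_o hc
  | r =>
    exact noFire_r_transfer hlen (fun k hk => hY k (by omega))
      (by rw [← hY j hj]; exact hc) (hnf j (by omega))
  | l =>
    have hVj : gg V j = .l := by rw [← hY j hj]; exact hc
    have hjlen : j < V.length := lt_length_of_gg (by rw [hVj]; simp)
    obtain ⟨h2, hnb⟩ := (noFire_l_iff hVj).1 (hnf j (by omega))
    have hj2 : q + 2 ≤ j := by
      by_contra hc2
      exact h2 ⟨by omega, by rw [show j - 1 = q by omega]; exact hVo⟩
    rw [noFire_l_iff hc]
    constructor
    · rintro ⟨c1, c2⟩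
      exact h2 ⟨by omega, by rw [← hY (j - 1) (by omega)]; exact c2⟩
    · intro z hz
      obtain ⟨z', hz', hz'w, hz'a, hz'o, hz'n⟩ :=
        prevO_exists (show j ≤ V.length by omega) (show q < j by omega) hVo
      obtain ⟨k, hk1, hk2, hk3⟩ := hnb z' hz'
      by_cases hcase : q + 1 ≤ z'
      · have hzY : prevO Y j = some z' := by
          rw [prevO_some_iff (by omega : j ≤ Y.length)]
          exact ⟨hz'a, by rw [hY z' (by omega)]; exact hz'o,
            fun m hm1 hm2 => by rw [hY m (by omega)]; exact hz'n m hm1 hm2⟩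
        rw [hz] at hzY
        have hze : z = z' := Option.some.inj hzY
        exact ⟨k, by omega, hk2, by rw [hY k (by omega)]; exact hk3⟩
      · have hz'e : z' = q := by omega
        have hzY : prevO Y j = some a := by
          rw [prevO_some_iff (by omega : j ≤ Y.length)]
          refine ⟨by omega, hYa, ?_⟩
          intro m hm1 hm2
          by_cases hm : m < q
          · rw [hYbet m (by omega) hm]; simp
          · by_cases hmq : m = q
            · rw [hmq, hYq]; simp
            · rw [hY m (by omega)]
              exact hz'n m (by omega) hm2
        rw [hz] at hzY
        have hze : z = a := Option.some.inj hzY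
        exact ⟨k, by omega, hk2, by rw [hY k (by omega)]; exact hk3⟩

lemma transfer_l3 {V Y : List Cell} {a q : ℕ} (hlen : Y.length = V.length)
    (hqa : q + 2 ≤ a) (hVl : gg V a = .l) (hVo : gg V q = .o)
    (hbet : ∀ k, q < k → k < a → gg V k = .l)
    (hY : ∀ k, a < k → gg Y k = gg V k) (hYa : gg Y a = .o) (hYq : gg Y q = .r)
    (hYbet : ∀ k, q < k → k < a → gg Y k = .l)
    (hnf : ∀ j, a < j → NoFire V j) :
    ∀ j, q < j → NoFire Y j := by
  have halen : a < V.length := lt_length_of_gg (by rw [hVl]; simp)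
  intro j hj
  by_cases hja : j = a
  · exact noFire_o (by rw [hja]; exact hYa)
  by_cases hjlta : j < a
  · -- q < j < a
    have hcl : gg Y j = .l := hYbet j hj hjlta
    rw [noFire_l_iff hcl]
    constructor
    · rintro ⟨c1, c2⟩
      by_cases hq1 : j - 1 = q
      · rw [hq1, hYq] at c2; exact absurd c2 (by simp)
      · rw [hYbet (j - 1) (by omega) (by omega)] at c2
        exact absurd c2 (by simp)
    · intro z hz
      obtain ⟨s1, s2, s3⟩ := (prevO_some_iff (by omega : j ≤ Y.length)).1 hz
      have hzq : z < q := by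
        rcases Nat.lt_trichotomy z q with h | h | h
        · exact h
        · rw [h, hYq] at s2; exact absurd s2 (by simp)
        · rw [hYbet z h (by omega)] at s2; exact absurd s2 (by simp)
      exact ⟨q, hzq, by omega, by rw [hYq]; simp⟩
  · -- j > a
    have hja' : a < j := by omega
    cases hc : gg Y j with
    | o => exact noFire_o hc
    | r =>
      exact noFire_r_transfer hlen (fun k hk => hY k (by omega))
        (by rw [← hY j hja']; exact hc) (hnf j hja')
    | l =>
      have hVj : gg V j = .l := by rw [← hY j hja']; exact hc
      have hjlen : j < V.length := lt_length_of_gg (by rw [hVj]; simp)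
      obtain ⟨h2, hnb⟩ := (noFire_l_iff hVj).1 (hnf j hja')
      have hj2 : a + 2 ≤ j := by
        by_contra hc2
        have hje : j = a + 1 := by omega
        subst hje
        have hp : prevO V (a + 1) = some q := by
          rw [prevO_some_iff (by omega : a + 1 ≤ V.length)]
          refine ⟨by omega, hVo, ?_⟩
          intro m hm1 hm2
          by_cases hm : m = a
          · rw [hm, hVl]; simp
          · rw [hbet m hm1 (by omega)]; simp
        obtain ⟨k, hk1, hk2, hk3⟩ := hnb q hp
        by_cases hk : k = a
        · exact hk3 (by rw [hk]; exact hVl)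
        · exact hk3 (hbet k hk1 (by omega))
      rw [noFire_l_iff hc]
      constructor
      · rintro ⟨c1, c2⟩
        exact h2 ⟨by omega, by rw [← hY (j - 1) (by omega)]; exact c2⟩
      · intro z hz
        obtain ⟨z', hz', hz'w, hz'a, hz'o, hz'n⟩ :=
          prevO_exists (show j ≤ V.length by omega) (show q < j by omega) hVo
        obtain ⟨k, hk1, hk2, hk3⟩ := hnb z' hz'
        have hz'no : z' = q ∨ a < z' := by
          rcases Nat.lt_trichotomy z' a with h | h | h
          · left
            by_contra hzq
            rw [hbet z' (by omega) h] at hz'o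
            exact absurd hz'o (by simp)
          · rw [h, hVl] at hz'o; exact absurd hz'o (by simp)
          · right; exact h
        rcases hz'no with hz'e | hz'gt
        · have hzY : prevO Y j = some a := by
            rw [prevO_some_iff (by omega : j ≤ Y.length)]
            refine ⟨by omega, hYa, ?_⟩
            intro m hm1 hm2
            rw [hY m hm1]
            exact hz'n m (by omega) hm2
          rw [hz] at hzY
          have hze : z = a := Option.some.inj hzY
          have hka : a < k := by
            rcases Nat.lt_trichotomy k a with h | h | h
            · exact absurd (hbet k (by omega) h) hk3
            · exact absurd (h ▸ hVl) hk3
            · exact h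
          exact ⟨k, by omega, hk2, by rw [hY k hka]; exact hk3⟩
        · have hzY : prevO Y j = some z' := by
            rw [prevO_some_iff (by omega : j ≤ Y.length)]
            exact ⟨hz'a, by rw [hY z' hz'gt]; exact hz'o,
              fun m hm1 hm2 => by rw [hY m (by omega)]; exact hz'n m hm1 hm2⟩
          rw [hz] at hzY
          have hze : z = z' := Option.some.inj hzY
          exact ⟨k, by omega, hk2, by rw [hY k (by omega)]; exact hk3⟩

end Transfer

section Bottom

lemma mstep_fail {V : List Cell} (hnf : ∀ j, 0 < j → NoFire V j)
    (h0 : iterAux (flipAbove V 0) 0 = negState V) : Mstep V = negState V := by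
  unfold Mstep
  have hdesc := desc (X := V) (V.length - 1) 0 (by omega) (fun j hj => hnf j hj)
  rw [flipAbove_of_ge (by omega)] at hdesc
  rw [hdesc, h0]

lemma bottom_r2 {V : List Cell} {a : ℕ} (hc : gg V a = .r) (h1 : a + 1 < V.length)
    (h2 : gg V (a + 1) = .o) (hnf : ∀ j, a < j → NoFire V j) :
    Mstep (negState (((flipAbove V a).set a .o).set (a + 1) .r)) = negState V := by
  have halen : a < V.length := by omega
  set Y := negState (((flipAbove V a).set a .o).set (a + 1) .r) with hYdef
  have hlen : Y.length = V.length := by simp [hYdef]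
  have hgg : ∀ i, gg Y i =
      if i < a then (gg V i).flip else if i = a then .o else if i = a + 1 then .l
      else gg V i := by
    intro i
    rw [hYdef, gg_negState, gg_set, gg_set, gg_flipAbove]
    simp only [List.length_set, length_flipAbove]
    split_ifs <;>
      first
        | rfl | omega | (rw [Cell.flip_flip])
        | (rw [show i = a by omega, hc]; try rfl)
        | (rw [show i = a + 1 by omega, h2]; try rfl)
  have hnfY : ∀ j, a + 1 < j → NoFire Y j := by
    refine transfer_r2 hlen h2 ?_ ?_ ?_ hnf
    · intro k hk
      rw [hgg k, if_neg (by omega), if_neg (by omega), if_neg (by omega)]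
    · rw [hgg (a + 1), if_neg (by omega), if_neg (by omega), if_pos rfl]
    · rw [hgg a, if_neg (by omega), if_pos rfl]
  unfold Mstep
  have hdesc := desc (X := Y) (Y.length - 1) (a + 1) (by omega) hnfY
  rw [flipAbove_of_ge (by omega)] at hdesc
  rw [hdesc]
  rw [iterF_l2 (by rw [hgg (a + 1), if_neg (by omega), if_neg (by omega), if_pos rfl])
    (by omega)
    (by rw [Nat.add_sub_cancel, hgg a, if_neg (by omega), if_pos rfl])]
  apply ext_gg (by simp [hlen])
  intro i
  simp only [gg_set, gg_negState, List.length_set, length_flipAbove, hlen,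
    Nat.add_sub_cancel, gg_flipAbove, hgg i]
  split_ifs <;>
    first
      | rfl | omega | (rw [Cell.flip_flip])
      | (rw [show i = a by omega, hc]; try rfl)
      | (rw [show i = a + 1 by omega, h2]; try rfl)
      | (rw [show i = a - 1 by omega, h2]; try rfl)

lemma bottom_r4 {V : List Cell} {a q : ℕ} (hc : gg V a = .r)
    (h1 : ¬(a + 1 < V.length ∧ gg V (a + 1) = .o)) (hq : nextO V a = some q)
    (hb : ∀ k, a < k → k < q → gg V k = .l) (hnf : ∀ j, a < j → NoFire V j) :
    Mstep (negState (((flipAbove V a).set a .o).set q .r)) = negState V := by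
  obtain ⟨hq1, hq2, hq3, hq4⟩ := nextO_some_iff.1 hq
  have halen : a < V.length := by omega
  have haq : a + 2 ≤ q := by
    by_contra hcc
    exact h1 ⟨by omega, by rw [show a + 1 = q by omega]; exact hq3⟩
  set Y := negState (((flipAbove V a).set a .o).set q .r) with hYdef
  have hlen : Y.length = V.length := by simp [hYdef]
  have hgg : ∀ i, gg Y i =
      if i < a then (gg V i).flip else if i = a then .o else if i = q then .l
      else gg V i := by
    intro i
    rw [hYdef, gg_negState, gg_set, gg_set, gg_flipAbove]
    simp only [List.length_set, length_flipAbove]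
    split_ifs <;>
      first
        | rfl | omega | (rw [Cell.flip_flip])
        | (rw [show i = a by omega, hc]; try rfl)
        | (rw [show i = q by omega, hq3]; try rfl)
  have hYbet : ∀ k, a < k → k < q → gg Y k = .l := by
    intro k hk1 hk2
    rw [hgg k, if_neg (by omega), if_neg (by omega), if_neg (by omega)]
    exact hb k hk1 hk2
  have hYa : gg Y a = .o := by rw [hgg a, if_neg (by omega), if_pos rfl]
  have hYq : gg Y q = .l := by
    rw [hgg q, if_neg (by omega), if_neg (by omega), if_pos rfl]
  have hnfY : ∀ j, q < j → NoFire Y j := by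
    refine transfer_r4 hlen haq hq3 ?_ hYq hYbet hYa hnf
    · intro k hk
      rw [hgg k, if_neg (by omega), if_neg (by omega), if_neg (by omega)]
  unfold Mstep
  have hdesc := desc (X := Y) (Y.length - 1) q (by omega) hnfY
  rw [flipAbove_of_ge (by omega)] at hdesc
  rw [hdesc]
  rw [iterF_l3 hYq
    (by
      rintro ⟨c1, c2⟩
      rw [hYbet (q - 1) (by omega) (by omega)] at c2
      exact absurd c2 (by simp))
    (show prevO Y q = some a by
      rw [prevO_some_iff (by omega : q ≤ Y.length)]
      refine ⟨by omega, hYa, ?_⟩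
      intro m hm1 hm2
      rw [hYbet m hm1 hm2]
      simp)
    (fun k hk1 hk2 => hYbet k hk1 hk2)]
  apply ext_gg (by simp [hlen])
  intro i
  simp only [gg_set, gg_setRange, gg_negState, List.length_set, length_setRange,
    length_flipAbove, hlen, gg_flipAbove, hgg i]
  split_ifs <;>
    first
      | rfl | omega | (rw [Cell.flip_flip])
      | (rw [show i = a by omega, hc]; try rfl)
      | (rw [show i = q by omega, hq3]; try rfl)
      | (rw [hb i (by omega) (by omega)]; try rfl)

lemma bottom_l2 {V : List Cell} {a : ℕ} (hc : gg V a = .l) (h1 : 0 < a)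
    (h2 : gg V (a - 1) = .o) (hnf : ∀ j, a < j → NoFire V j) :
    Mstep (negState (((flipAbove V a).set a .o).set (a - 1) .l)) = negState V := by
  have halen : a < V.length := lt_length_of_gg (by rw [hc]; simp)
  set Y := negState (((flipAbove V a).set a .o).set (a - 1) .l) with hYdef
  have hlen : Y.length = V.length := by simp [hYdef]
  have hgg : ∀ i, gg Y i =
      if i < a - 1 then (gg V i).flip else if i = a - 1 then .r else if i = a then .o
      else gg V i := by
    intro i
    rw [hYdef, gg_negState, gg_set, gg_set, gg_flipAbove]
    simp only [List.length_set, length_flipAbove]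
    split_ifs <;>
      first
        | rfl | omega | (rw [Cell.flip_flip])
        | (rw [show i = a by omega, hc]; try rfl)
        | (rw [show i = a - 1 by omega, h2]; try rfl)
  have hYa : gg Y a = .o := by
    rw [hgg a, if_neg (by omega), if_neg (by omega), if_pos rfl]
  have hYa1 : gg Y (a - 1) = .r := by
    rw [hgg (a - 1), if_neg (by omega), if_pos rfl]
  have hnfY : ∀ j, a < j → NoFire Y j := by
    refine transfer_l2 hlen h1 hc h2 ?_ hYa hnf
    · intro k hk
      rw [hgg k, if_neg (by omega), if_neg (by omega), if_neg (by omega)]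
  unfold Mstep
  have hdesc := desc (X := Y) (Y.length - 1) (a - 1) (by omega) (fun j hj => by
    by_cases hja : j = a
    · exact noFire_o (hja ▸ hYa)
    · exact hnfY j (by omega))
  rw [flipAbove_of_ge (by omega)] at hdesc
  rw [hdesc]
  rw [iterF_r2 hYa1 (by omega)
    (by rw [show a - 1 + 1 = a by omega]; exact hYa)]
  apply ext_gg (by simp [hlen])
  intro i
  simp only [gg_set, gg_negState, List.length_set, length_flipAbove, hlen,
    show a - 1 + 1 = a by omega, gg_flipAbove, hgg i]
  split_ifs <;>
    first
      | rfl | omega | (rw [Cell.flip_flip])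
      | (rw [show i = a by omega, hc]; try rfl)
      | (rw [show i = a + 1 by omega, h2]; try rfl)
      | (rw [show i = a - 1 by omega, h2]; try rfl)

lemma bottom_l3 {V : List Cell} {a q : ℕ} (hc : gg V a = .l)
    (h1 : ¬(0 < a ∧ gg V (a - 1) = .o)) (hq : prevO V a = some q)
    (hb : ∀ k, q < k → k < a → gg V k = .l) (hnf : ∀ j, a < j → NoFire V j) :
    Mstep (negState (((setRange (flipAbove V a) (q + 1) a .r).set a .o).set q .l)) =
      negState V := by
  have halen : a < V.length := lt_length_of_gg (by rw [hc]; simp)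
  obtain ⟨hq1, hq2, hq3⟩ := (prevO_some_iff (by omega : a ≤ V.length)).1 hq
  have hqa : q + 2 ≤ a := by
    by_contra hcc
    exact h1 ⟨by omega, by rw [show a - 1 = q by omega]; exact hq2⟩
  set Y := negState (((setRange (flipAbove V a) (q + 1) a .r).set a .o).set q .l)
    with hYdef
  have hlen : Y.length = V.length := by simp [hYdef]
  have hgg : ∀ i, gg Y i =
      if i < q then (gg V i).flip else if i = q then .r else if i < a then .l
      else if i = a then .o else gg V i := by
    intro i
    rw [hYdef, gg_negState, gg_set, gg_set, gg_setRange, gg_flipAbove]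
    simp only [List.length_set, length_setRange, length_flipAbove]
    split_ifs <;>
      first
        | rfl | omega | (rw [Cell.flip_flip])
        | (rw [show i = a by omega, hc]; try rfl)
        | (rw [show i = q by omega, hq2]; try rfl)
        | (rw [hb i (by omega) (by omega)]; try rfl)
  have hYa : gg Y a = .o := by
    rw [hgg a, if_neg (by omega), if_neg (by omega), if_neg (by omega), if_pos rfl]
  have hYq : gg Y q = .r := by rw [hgg q, if_neg (by omega), if_pos rfl]
  have hYbet : ∀ k, q < k → k < a → gg Y k = .l := by
    intro k hk1 hk2
    rw [hgg k, if_neg (by omega), if_neg (by omega), if_pos (by omega)]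
  have hnfY : ∀ j, q < j → NoFire Y j := by
    refine transfer_l3 hlen hqa hc hq2 hb ?_ hYa hYq hYbet hnf
    · intro k hk
      rw [hgg k, if_neg (by omega), if_neg (by omega), if_neg (by omega),
        if_neg (by omega)]
  unfold Mstep
  have hdesc := desc (X := Y) (Y.length - 1) q (by omega) hnfY
  rw [flipAbove_of_ge (by omega)] at hdesc
  rw [hdesc]
  rw [iterF_r4 hYq
    (by
      rintro ⟨c1, c2⟩
      rw [hYbet (q + 1) (by omega) (by omega)] at c2
      exact absurd c2 (by simp))
    (show nextO Y q = some a by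
      rw [nextO_some_iff]
      refine ⟨by omega, by omega, hYa, ?_⟩
      intro m hm1 hm2
      rw [hYbet m hm1 hm2]
      simp)
    (fun k hk1 hk2 => hYbet k hk1 hk2)]
  apply ext_gg (by simp [hlen])
  intro i
  simp only [gg_set, gg_negState, List.length_set, length_flipAbove, hlen,
    gg_flipAbove, hgg i]
  split_ifs <;>
    first
      | rfl | omega | (rw [Cell.flip_flip])
      | (rw [show i = a by omega, hc]; try rfl)
      | (rw [show i = q by omega, hq2]; try rfl)
      | (rw [hb i (by omega) (by omega)]; try rfl)

lemma claimD : ∀ p (V : List Cell), (∀ j, p < j → NoFire V j) →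
    Mstep (negState (iterAux (flipAbove V p) p)) = negState V := by
  intro p
  induction p using Nat.strong_induction_on with
  | _ p ih =>
    intro V hnf
    cases hc : gg V p with
    | o =>
      rw [iterF_o hc]
      by_cases h0 : p = 0
      · rw [if_pos h0, negState_negState]
        subst h0
        exact mstep_fail hnf (by rw [iterF_o hc, if_pos rfl])
      · rw [if_neg h0]
        exact ih (p - 1) (by omega) V (fun j hj => by
          by_cases hjp : j = p
          · exact noFire_o (hjp ▸ hc)
          · exact hnf j (by omega))
    | r =>
      by_cases h1 : p + 1 < V.length ∧ gg V (p + 1) = .o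
      · rw [iterF_r2 hc h1.1 h1.2]
        exact bottom_r2 hc h1.1 h1.2 hnf
      · have tail5 : (∀ q', nextO V p = some q' →
            ∃ k, p < k ∧ k < q' ∧ gg V k ≠ Cell.l) →
            Mstep (negState (iterAux (flipAbove V p) p)) = negState V := by
          intro hnb
          rw [iterF_r5 hc h1 hnb]
          by_cases h0 : p = 0
          · rw [if_pos h0, negState_negState]
            subst h0
            exact mstep_fail hnf (by rw [iterF_r5 hc h1 hnb, if_pos rfl])
          · rw [if_neg h0]
            exact ih (p - 1) (by omega) V (fun j hj => by
              by_cases hjp : j = p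
              · subst hjp; exact (noFire_r_iff hc).2 ⟨h1, hnb⟩
              · exact hnf j (by omega))
        cases hq : nextO V p with
        | some q =>
          by_cases hb : ∀ k, p < k → k < q → gg V k = .l
          · rw [iterF_r4 hc h1 hq hb]
            exact bottom_r4 hc h1 hq hb hnf
          · push_neg at hb
            obtain ⟨k, hk1, hk2, hk3⟩ := hb
            exact tail5 (fun q' hq' => by
              rw [hq] at hq'
              exact ⟨k, hk1, (Option.some.inj hq') ▸ hk2, hk3⟩)
        | none =>
          exact tail5 (fun q' hq' => by rw [hq] at hq'; cases hq')
    | l =>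
      by_cases h1 : 0 < p ∧ gg V (p - 1) = .o
      · rw [iterF_l2 hc h1.1 h1.2]
        exact bottom_l2 hc h1.1 h1.2 hnf
      · have tail5 : (∀ q', prevO V p = some q' →
            ∃ k, q' < k ∧ k < p ∧ gg V k ≠ Cell.l) →
            Mstep (negState (iterAux (flipAbove V p) p)) = negState V := by
          intro hnb
          rw [iterF_l5 hc h1 hnb]
          by_cases h0 : p = 0
          · rw [if_pos h0, negState_negState]
            subst h0
            exact mstep_fail hnf (by rw [iterF_l5 hc h1 hnb, if_pos rfl])
          · rw [if_neg h0]
            exact ih (p - 1) (by omega) V (fun j hj => by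
              by_cases hjp : j = p
              · subst hjp; exact (noFire_l_iff hc).2 ⟨h1, hnb⟩
              · exact hnf j (by omega))
        cases hq : prevO V p with
        | some q =>
          by_cases hb : ∀ k, q < k → k < p → gg V k = .l
          · rw [iterF_l3 hc h1 hq hb]
            exact bottom_l3 hc h1 hq hb hnf
          · push_neg at hb
            obtain ⟨k, hk1, hk2, hk3⟩ := hb
            exact tail5 (fun q' hq' => by
              rw [hq] at hq'
              exact ⟨k, (Option.some.inj hq') ▸ hk1, hk2, hk3⟩)
        | none =>
          exact tail5 (fun q' hq' => by rw [hq] at hq'; cases hq')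

end Bottom
/-- For every state `S`, one has `M(N(M(S))) = N(S)`. -/
theorem stmt7 (S : List Cell) :
    Mstep (negState (Mstep S)) = negState S := by
  have h := claimD (S.length - 1) S (fun j hj => noFire_o (gg_of_ge (by omega)))
  rw [flipAbove_of_ge (by omega)] at h
  exact h
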